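/- arXiv:1907.04109 — 2 statements merged into one kernel-verified Lean document; each statement's English description precedes it below -/
import Mathlib

section
/- Let F := X·(1 + X + X²/8)⁻¹ ∈ X + X²ℂ[[X]], let h ∈ X + X²ℂ[[X]] be the compositional inverse of F (F∘h = X and h∘F = X), and let s ∈ ℂ[[X]] be the unique power series with coeff_0 s = 1 and s² = 1 − 2X + X²/2. Then h = X·s·h', i.e. 𝔗h = h/h' = X·√(1 − 2X + X²/2). (This is the boxed identity φ₂(x) = ln(1 + x + x²/8): the series φ₂ satisfies 𝔗Q(X·e^{−φ₂(X)}) = X·e^{(1/2)φ₂(−2X)}, giving the solution of 𝔗f = f(pX)/p for p² = −2.) -/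
open PowerSeries Finset

/-- Composition `f ∘ g` of formal power series (intended for `g` with zero constant
term). -/
noncomputable def pcomp (f g : PowerSeries ℂ) : PowerSeries ℂ :=
  PowerSeries.mk fun n => ∑ k ∈ range (n + 1), coeff k f * coeff n (g ^ k)

lemma coeff_pow_zero_of_lt {g : PowerSeries ℂ} (hg : coeff 0 g = 0) {n k : ℕ}
    (hnk : n < k) : coeff n (g ^ k) = 0 := by
  have h1 : (X : PowerSeries ℂ) ∣ g := X_dvd_iff.mpr (by simpa using hg)
  have h2 : (X : PowerSeries ℂ) ^ k ∣ g ^ k := pow_dvd_pow_of_dvd h1 k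
  exact X_pow_dvd_iff.mp h2 n hnk

lemma coeff_pcomp (f g : PowerSeries ℂ) (n : ℕ) :
    coeff n (pcomp f g) = ∑ k ∈ range (n + 1), coeff k f * coeff n (g ^ k) := by
  simp [pcomp]

lemma coeff_eval₂ (P : Polynomial ℂ) {g : PowerSeries ℂ} (hg : coeff 0 g = 0) (n : ℕ) :
    coeff n (P.eval₂ (C (R := ℂ)) g) = ∑ k ∈ range (n + 1), P.coeff k * coeff n (g ^ k) := by
  have hd : P.natDegree < max (n + 1) (P.natDegree + 1) := lt_of_lt_of_le (Nat.lt_succ_self _) (le_max_right _ _)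
  rw [Polynomial.eval₂_eq_sum_range' (C (R := ℂ)) hd g, map_sum]
  have : ∀ k ∈ range (max (n + 1) (P.natDegree + 1)),
      coeff n (C (P.coeff k) * g ^ k) = P.coeff k * coeff n (g ^ k) := by
    intro k _; rw [coeff_C_mul]
  rw [sum_congr rfl this]
  symm
  apply sum_subset
  · exact range_subset_range.mpr (le_max_left _ _)
  · intro k _ hk
    rw [mem_range, not_lt] at hk
    rw [coeff_pow_zero_of_lt hg (by omega), mul_zero]

lemma coeff_pcomp_trunc (f : PowerSeries ℂ) {g : PowerSeries ℂ} (hg : coeff 0 g = 0)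
    {p m : ℕ} (hpm : p < m) :
    coeff p (pcomp f g) = coeff p ((trunc m f).eval₂ (C (R := ℂ)) g) := by
  rw [coeff_eval₂ _ hg, coeff_pcomp]
  apply sum_congr rfl
  intro k hk
  rw [mem_range] at hk
  rw [PowerSeries.coeff_trunc, if_pos (by omega)]

lemma pcomp_mul (f₁ f₂ : PowerSeries ℂ) {g : PowerSeries ℂ} (hg : coeff 0 g = 0) :
    pcomp (f₁ * f₂) g = pcomp f₁ g * pcomp f₂ g := by
  ext n
  rw [coeff_pcomp_trunc _ hg (Nat.lt_succ_self n)]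
  have key : coeff n ((trunc (n+1) (f₁ * f₂)).eval₂ (C (R := ℂ)) g)
      = coeff n (((trunc (n+1) f₁) * (trunc (n+1) f₂)).eval₂ (C (R := ℂ)) g) := by
    rw [coeff_eval₂ _ hg, coeff_eval₂ _ hg]
    apply sum_congr rfl
    intro k hk
    rw [mem_range] at hk
    congr 1
    have := trunc_trunc_mul_trunc (n := n+1) f₁ f₂
    have h2 := congrArg (fun q => Polynomial.coeff q k) this
    rw [PowerSeries.coeff_trunc, PowerSeries.coeff_trunc, if_pos (by omega), if_pos (by omega)] at h2
    rw [PowerSeries.coeff_trunc, if_pos (by omega), ← h2, ← Polynomial.coeff_coe, Polynomial.coe_mul]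
  rw [key, Polynomial.eval₂_mul, coeff_mul, coeff_mul]
  apply sum_congr rfl
  intro pq hpq
  rw [HasAntidiagonal.mem_antidiagonal] at hpq
  rw [coeff_pcomp_trunc f₁ hg (show pq.1 < n+1 by omega),
      coeff_pcomp_trunc f₂ hg (show pq.2 < n+1 by omega)]

lemma pcomp_one (g : PowerSeries ℂ) : pcomp 1 g = 1 := by
  ext n
  rw [coeff_pcomp]
  simp [coeff_one]

lemma pcomp_add (f₁ f₂ g : PowerSeries ℂ) :
    pcomp (f₁ + f₂) g = pcomp f₁ g + pcomp f₂ g := by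
  ext n
  simp [coeff_pcomp, add_mul, sum_add_distrib]

lemma pcomp_C_mul (c : ℂ) (f g : PowerSeries ℂ) :
    pcomp (C c * f) g = C c * pcomp f g := by
  ext n
  simp [coeff_pcomp, coeff_C_mul, mul_sum, mul_assoc]

lemma pcomp_X {g : PowerSeries ℂ} (hg : coeff 0 g = 0) : pcomp X g = g := by
  ext n
  rw [coeff_pcomp]
  rcases Nat.eq_zero_or_pos n with hn | hn
  · subst hn; simpa [coeff_X] using hg.symm
  · rw [Finset.sum_eq_single 1]
    · simp
    · intro k _ hk; simp [coeff_X, hk]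
    · intro hk; rw [mem_range] at hk; omega

/-- The series `F = X·(1 + X + X²/8)⁻¹ = X·e^{−φ₂(X)}` where `φ₂(x) = ln(1+x+x²/8)`. -/
noncomputable def F₂ : PowerSeries ℂ := X * (1 + X + C (1 / 8 : ℂ) * X ^ 2)⁻¹

/-- **The boxed identity `φ₂(x) = ln(1 + x + x²/8)`.**  Let `h` be the compositional
inverse of `F₂ = X·(1+X+X²/8)⁻¹` and let `s` be the square root of `1 − 2X + X²/2`
with constant term `1`.  Then `𝔗h = h/h' = X·√(1 − 2X + X²/2)`, i.e.
`h = X·s·h'`.  (This expresses `𝔗Q(X·e^{−φ₂(X)}) = X·e^{(1/2)φ₂(−2X)}`, the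
solution of `𝔗f = f(pX)/p` for `p² = −2`.) -/
theorem statement10 (h : PowerSeries ℂ)
    (hh0 : coeff 0 h = 0) (hh1 : coeff 1 h = 1)
    (hinv1 : pcomp F₂ h = X) (hinv2 : pcomp h F₂ = X)
    (s : PowerSeries ℂ)
    (hs0 : coeff 0 s = 1)
    (hs : s ^ 2 = 1 - 2 * X + C (1 / 2 : ℂ) * X ^ 2) :
    h = X * s * d⁄dX ℂ h := by
  set u : PowerSeries ℂ := 1 + X + C (1 / 8) * X ^ 2 with hu_def
  have hu0 : constantCoeff u ≠ 0 := by
    rw [hu_def]; simp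
  have huinv : u * u⁻¹ = 1 := PowerSeries.mul_inv_cancel u hu0
  -- pcomp u h
  have hpu : pcomp u h = 1 + h + C (1 / 8) * h ^ 2 := by
    rw [hu_def, pcomp_add, pcomp_add, pcomp_one, pcomp_X hh0, pcomp_C_mul,
      sq, pcomp_mul _ _ hh0, pcomp_X hh0, ← sq]
  -- functional equation E : h = X * (1 + h + (1/8) h²)
  have hF : pcomp F₂ h = h * pcomp u⁻¹ h := by
    rw [show F₂ = X * u⁻¹ from rfl, pcomp_mul _ _ hh0, pcomp_X hh0]
  have hXeq : h * pcomp u⁻¹ h = X := by rw [← hF, hinv1]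
  have hone : pcomp u h * pcomp u⁻¹ h = 1 := by
    rw [← pcomp_mul _ _ hh0, huinv, pcomp_one]
  have E : h = X * (1 + h + C (1 / 8) * h ^ 2) := by
    calc h = h * (pcomp u h * pcomp u⁻¹ h) := by rw [hone, mul_one]
    _ = h * pcomp u⁻¹ h * pcomp u h := by ring
    _ = X * pcomp u h := by rw [hXeq]
    _ = X * (1 + h + C (1 / 8) * h ^ 2) := by rw [hpu]
  -- derivative of E
  have E' : d⁄dX ℂ h = (1 + h + C (1 / 8) * h ^ 2)
      + X * (d⁄dX ℂ h + C (1 / 8) * (2 * h * d⁄dX ℂ h)) := by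
    have E2 : h = X * (1 + h + C (1 / 8) * (h * h)) := by linear_combination E
    have E3 := congrArg (⇑(d⁄dX ℂ)) E2
    simp only [Derivation.leibniz, smul_eq_mul, map_add, derivative_X,
      derivative_C, Derivation.map_one_eq_zero] at E3
    linear_combination E3
  -- identify s
  have hc2 : (C (1 / 2) : PowerSeries ℂ) = 1 - 4 * C (1 / 8) := by
    have h4 : (1 / 2 : ℂ) = 1 - 4 * (1 / 8) := by norm_num
    rw [h4, map_sub, map_mul, map_one, map_ofNat]
  set t : PowerSeries ℂ := 1 - X - 2 * C (1 / 8) * X * h with ht_def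
  have hsq : (s - t) * (s + t) = 0 := by
    rw [ht_def]
    linear_combination hs + 4 * C (1 / 8) * X * E + X ^ 2 * hc2
  have hst : s = t := by
    rcases mul_eq_zero.mp hsq with h1 | h1
    · exact sub_eq_zero.mp h1
    · exfalso
      have : coeff 0 (s + t) = 2 := by
        rw [map_add, hs0, ht_def]
        simp
        norm_num
      rw [h1] at this
      simp at this
  rw [hst, ht_def]
  linear_combination E - X * E'
end

section
/- Let f, g ∈ X + X²ℂ[[X]] with f ≠ g. Suppose there exist F, G ∈ X + X²ℂ[[X]] with F = f·F', G = g·G' and f·F = g·G (the conclusion of Proposition 2.5), and suppose moreover f' + 2(coeff_2 g)·f = g' + 2(coeff_2 f)·g (the conclusion of Proposition 2.6; note g''(0) = 2·coeff_2 g). Then there exist p, A, B ∈ ℂ such that f = Δ_p·(1 + A·Δ_{−p}) and g = Δ_p·(1 + B·Δ_{−p}). (This is Theorem 2.2: the reflection equation p_s^f(α)p_{1−s}^g(α) = p_s^g(α)p_{1−s}^f(α) with f ≠ g has no solutions other than f = Δ_p(1+AΔ_{−p}), g = Δ_p(1+BΔ_{−p}); the two displayed hypotheses are exactly what the paper derives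 from the reflection equation in Propositions 2.5 and 2.6.) -/
open PowerSeries

/-- `Δ_p = (e^{pX} − 1)/p`, the power series with coefficient `p^{k−1}/k!` at `Xᵏ`
for `k ≥ 1` (and `Δ₀ = X`). -/
noncomputable def Delta (p : ℂ) : PowerSeries ℂ :=
  PowerSeries.mk fun k => if k = 0 then 0 else p ^ (k - 1) / (k.factorial : ℂ)

lemma coeff_Delta (p : ℂ) (k : ℕ) :
    coeff k (Delta p) = if k = 0 then 0 else p ^ (k - 1) / (k.factorial : ℂ) :=
  coeff_mk _ _

lemma coeff_Delta_zero (p : ℂ) : coeff 0 (Delta p) = 0 := by simp [coeff_Delta]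

lemma coeff_Delta_one (p : ℂ) : coeff 1 (Delta p) = 1 := by
  simp [coeff_Delta]

lemma coeff_Delta_two (p : ℂ) : coeff 2 (Delta p) = p / 2 := by
  rw [coeff_Delta]; norm_num

lemma coeff_Delta_three (p : ℂ) : coeff 3 (Delta p) = p ^ 2 / 6 := by
  rw [coeff_Delta]; norm_num [Nat.factorial]

lemma one_add_C_mul_Delta (p : ℂ) :
    (1 : PowerSeries ℂ) + C p * Delta p = rescale p (exp ℂ) := by
  ext k
  rw [map_add, coeff_rescale, coeff_exp, coeff_C_mul, coeff_Delta]
  cases k with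
  | zero => simp
  | succ n =>
    rw [coeff_one, if_neg (Nat.succ_ne_zero n), if_neg (Nat.succ_ne_zero n)]
    have h : ((n+1).factorial : ℂ) ≠ 0 := Nat.cast_ne_zero.mpr (Nat.factorial_ne_zero _)
    have : (algebraMap ℚ ℂ) (1 / ((n+1).factorial : ℚ)) = 1 / ((n+1).factorial : ℂ) := by
      push_cast; simp
    rw [this]
    simp only [Nat.add_sub_cancel]
    field_simp
    ring

lemma deriv_Delta (p : ℂ) :
    d⁄dX ℂ (Delta p) = 1 + C p * Delta p := by
  ext k
  rw [coeff_derivative, map_add, coeff_C_mul, coeff_Delta, coeff_Delta]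
  have h : ((k+1).factorial : ℂ) ≠ 0 := Nat.cast_ne_zero.mpr (Nat.factorial_ne_zero _)
  cases k with
  | zero => simp [Nat.factorial]
  | succ n =>
    simp only [coeff_one, if_neg (Nat.succ_ne_zero _), Nat.add_sub_cancel, zero_add]
    have e : ((n+1+1).factorial : ℂ) = ((n:ℂ)+1+1) * ((n+1).factorial : ℂ) := by
      rw [Nat.factorial_succ]; push_cast; ring
    rw [e]
    have h2 : ((n+1).factorial : ℂ) ≠ 0 := Nat.cast_ne_zero.mpr (Nat.factorial_ne_zero _)
    have h3 : ((n:ℂ)+1+1) ≠ 0 := by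
      have := Nat.cast_add_one_ne_zero (R := ℂ) (n+1); push_cast at this ⊢; exact this
    push_cast
    field_simp
    ring

lemma C_ne_zero {c : ℂ} (hc : c ≠ 0) : (C c : PowerSeries ℂ) ≠ 0 := fun h =>
  hc (by simpa using congrArg (constantCoeff) h)

lemma Delta_key (p : ℂ) :
    Delta p - Delta (-p) = C p * (Delta p * Delta (-p)) := by
  by_cases hp : p = 0
  · subst hp; simp
  · have h1 := one_add_C_mul_Delta p
    have h2 := one_add_C_mul_Delta (-p)
    have hprod : ((1 : PowerSeries ℂ) + C p * Delta p) *
        ((1 : PowerSeries ℂ) + C (-p) * Delta (-p)) = 1 := by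
      rw [h1, h2, exp_mul_exp_eq_exp_add, add_neg_cancel, rescale_zero]
      simp
    rw [map_neg] at hprod
    have key : C p * (Delta p - Delta (-p) - C p * (Delta p * Delta (-p))) = 0 := by
      linear_combination hprod
    rcases mul_eq_zero.mp key with h | h
    · exact absurd h (C_ne_zero hp)
    · linear_combination h

lemma coeff_mul_range (x y : PowerSeries ℂ) (n : ℕ) :
    coeff n (x * y) = ∑ i ∈ Finset.range (n+1), coeff i x * coeff (n-i) y := by
  rw [coeff_mul, Finset.Nat.sum_antidiagonal_eq_sum_range_succ_mk]

lemma coeff_mul_lowvanish2 (x y : PowerSeries ℂ) (q : ℕ)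
    (hx : ∀ k ≤ q, coeff k x = 0) :
    coeff (q+2) (x * y)
      = coeff (q+1) x * coeff 1 y + coeff (q+2) x * coeff 0 y := by
  rw [coeff_mul_range, show q+2+1 = (q+1)+1+1 from rfl, Finset.sum_range_succ,
    Finset.sum_range_succ]
  rw [Finset.sum_eq_zero (fun i hi => by
    rw [hx i (by have := Finset.mem_range.mp hi; omega), zero_mul])]
  have e1 : q+2-(q+1) = 1 := by omega
  have e2 : q+2-(q+2) = 0 := by omega
  rw [e1, e2, zero_add]

lemma coeff_mul_lowvanish3 (x y : PowerSeries ℂ) (q : ℕ)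
    (hx : ∀ k ≤ q, coeff k x = 0) :
    coeff (q+3) (x * y)
      = coeff (q+1) x * coeff 2 y + coeff (q+2) x * coeff 1 y
        + coeff (q+3) x * coeff 0 y := by
  rw [coeff_mul_range, show q+3+1 = (q+1)+1+1+1 from rfl, Finset.sum_range_succ,
    Finset.sum_range_succ, Finset.sum_range_succ]
  rw [Finset.sum_eq_zero (fun i hi => by
    rw [hx i (by have := Finset.mem_range.mp hi; omega), zero_mul])]
  have e1 : q+3-(q+1) = 2 := by omega
  have e2 : q+3-(q+2) = 1 := by omega
  have e3 : q+3-(q+3) = 0 := by omega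
  rw [e1, e2, e3, zero_add]

lemma coeff_DD_two (p : ℂ) : coeff 2 (Delta p * Delta (-p)) = 1 := by
  rw [coeff_mul_range]
  simp [Finset.sum_range_succ, coeff_Delta_zero, coeff_Delta_one]

lemma coeff_DD_three (p : ℂ) : coeff 3 (Delta p * Delta (-p)) = 0 := by
  rw [coeff_mul_range]
  simp [Finset.sum_range_succ, coeff_Delta_zero, coeff_Delta_one, coeff_Delta_two]
  ring

lemma coeff_DD_zero (p : ℂ) : coeff 0 (Delta p * Delta (-p)) = 0 := by
  rw [coeff_mul_range]; simp [coeff_Delta_zero]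

lemma coeff_DD_one (p : ℂ) : coeff 1 (Delta p * Delta (-p)) = 0 := by
  rw [coeff_mul_range]; simp [Finset.sum_range_succ, coeff_Delta_zero]

lemma deriv_one_add_C_mul (c p : ℂ) :
    d⁄dX ℂ ((1 : PowerSeries ℂ) + C c * Delta p) = C c * (1 + C p * Delta p) := by
  rw [map_add, Derivation.map_one_eq_zero, zero_add, Derivation.leibniz, smul_eq_mul,
    smul_eq_mul, derivative_C, mul_zero, add_zero, deriv_Delta]

lemma deriv_fam (p c : ℂ) :
    d⁄dX ℂ (Delta p * (1 + C c * Delta (-p)))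
      = (1 + C p * Delta p) * (1 + C c * Delta (-p))
        + Delta p * (C c * (1 - C p * Delta (-p))) := by
  rw [Derivation.leibniz, smul_eq_mul, smul_eq_mul, deriv_one_add_C_mul, deriv_Delta, map_neg]
  ring


/-- **Theorem 2.2.** Let `f ≠ g` be normalized series satisfying the conclusions of
Propositions 2.5 and 2.6 (derived from the reflection equation
`p_s^f·p_{1−s}^g = p_s^g·p_{1−s}^f`): there are normalized `F, G` with `F = f·F'`,
`G = g·G'` and `f·F = g·G`, and moreover
`f' + g''(0)·f = g' + f''(0)·g` (note `g''(0) = 2·coeff₂ g`).  Then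
`f = Δ_p·(1 + A·Δ_{−p})` and `g = Δ_p·(1 + B·Δ_{−p})` for some `p, A, B ∈ ℂ`. -/
theorem statement16 (f g F G : PowerSeries ℂ)
    (hf0 : coeff 0 f = 0) (hf1 : coeff 1 f = 1)
    (hg0 : coeff 0 g = 0) (hg1 : coeff 1 g = 1)
    (hne : f ≠ g)
    (hF0 : coeff 0 F = 0) (hF1 : coeff 1 F = 1)
    (hG0 : coeff 0 G = 0) (hG1 : coeff 1 G = 1)
    (hF : F = f * d⁄dX ℂ F) (hG : G = g * d⁄dX ℂ G)
    (hfg : f * F = g * G)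
    (hder : d⁄dX ℂ f + C (2 * coeff 2 g) * f = d⁄dX ℂ g + C (2 * coeff 2 f) * g) :
    ∃ p A B : ℂ, f = Delta p * (1 + C A * Delta (-p)) ∧
      g = Delta p * (1 + C B * Delta (-p)) := by
  classical
  have hFne : F ≠ 0 := fun h => by rw [h] at hF1; simp at hF1
  -- step 1 : the Wronskian-type identity E1
  have hdmul : f * d⁄dX ℂ F + F * d⁄dX ℂ f = g * d⁄dX ℂ G + G * d⁄dX ℂ g := by
    simpa [Derivation.leibniz, smul_eq_mul] using congrArg (d⁄dX ℂ) hfg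
  have e1' : F * (d⁄dX ℂ f + 1) = G * (d⁄dX ℂ g + 1) := by
    rw [← hF, ← hG] at hdmul
    linear_combination hdmul
  have key : F * (f * (d⁄dX ℂ g + 1)) = F * (g * (d⁄dX ℂ f + 1)) := by
    calc F * (f * (d⁄dX ℂ g + 1)) = (f * F) * (d⁄dX ℂ g + 1) := by ring
    _ = (g * G) * (d⁄dX ℂ g + 1) := by rw [hfg]
    _ = g * (G * (d⁄dX ℂ g + 1)) := by ring
    _ = g * (F * (d⁄dX ℂ f + 1)) := by rw [← e1']
    _ = F * (g * (d⁄dX ℂ f + 1)) := by ring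
  have E1raw : f * (d⁄dX ℂ g + 1) = g * (d⁄dX ℂ f + 1) := mul_left_cancel₀ hFne key
  have E1 : f * d⁄dX ℂ g - g * d⁄dX ℂ f = g - f := by linear_combination E1raw
  set a := coeff 2 f with ha
  set b := coeff 2 g with hb
  have hfsub : f - g ≠ 0 := sub_ne_zero.mpr hne
  -- step 2 : a ≠ b
  have hab : a ≠ b := by
    intro habeq
    have key2 : (f - g) * (d⁄dX ℂ f + 1 + C (2*a) * f)
        = (C (2*a) - C (2*b)) * f^2 := by
      linear_combination E1 + f * hder
    rw [habeq, sub_self, zero_mul] at key2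
    have hz : d⁄dX ℂ f + 1 + C (2*b) * f = 0 := by
      rcases mul_eq_zero.mp key2 with h | h
      · exact absurd h hfsub
      · exact h
    have h0 := congrArg (coeff 0) hz
    simp only [map_add, coeff_derivative, coeff_C_mul, coeff_one, if_pos rfl, map_zero,
      zero_add, hf1, hf0, mul_zero] at h0
    norm_num at h0
  -- step 3 : coeff 3 g = coeff 3 f
  have h32 := congrArg (coeff 2) hder
  simp only [map_add, coeff_derivative, coeff_C_mul, ← ha, ← hb] at h32
  have h3 : coeff 3 g = coeff 3 f := by
    have := h32
    push_cast at this
    linear_combination (-1/3 : ℂ) * this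
  -- step 4 : choose p, A, B
  obtain ⟨p, hp⟩ := IsAlgClosed.exists_pow_nat_eq (k := ℂ) (6 * coeff 3 f) (n := 2) (by norm_num)
  set A := a - p/2 with hA
  set B := b - p/2 with hB
  set ft := Delta p * (1 + C A * Delta (-p)) with hft
  set gt := Delta p * (1 + C B * Delta (-p)) with hgt
  suffices hsuff : f = ft ∧ g = gt by exact ⟨p, A, B, hsuff.1, hsuff.2⟩
  have hft_exp : ft = Delta p + C A * (Delta p * Delta (-p)) := by rw [hft]; ring
  have hgt_exp : gt = Delta p + C B * (Delta p * Delta (-p)) := by rw [hgt]; ring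
  -- coefficients of ft, gt
  have cft0 : coeff 0 ft = 0 := by
    rw [hft_exp, map_add, coeff_C_mul, coeff_Delta_zero, coeff_DD_zero, mul_zero, add_zero]
  have cft1 : coeff 1 ft = 1 := by
    rw [hft_exp, map_add, coeff_C_mul, coeff_Delta_one, coeff_DD_one, mul_zero, add_zero]
  have cft2 : coeff 2 ft = a := by
    rw [hft_exp, map_add, coeff_C_mul, coeff_Delta_two, coeff_DD_two, mul_one, hA]; ring
  have cft3 : coeff 3 ft = coeff 3 f := by
    rw [hft_exp, map_add, coeff_C_mul, coeff_Delta_three, coeff_DD_three, mul_zero, add_zero]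
    linear_combination (1/6 : ℂ) * hp
  have cgt0 : coeff 0 gt = 0 := by
    rw [hgt_exp, map_add, coeff_C_mul, coeff_Delta_zero, coeff_DD_zero, mul_zero, add_zero]
  have cgt1 : coeff 1 gt = 1 := by
    rw [hgt_exp, map_add, coeff_C_mul, coeff_Delta_one, coeff_DD_one, mul_zero, add_zero]
  have cgt2 : coeff 2 gt = b := by
    rw [hgt_exp, map_add, coeff_C_mul, coeff_Delta_two, coeff_DD_two, mul_one, hB]; ring
  have cgt3 : coeff 3 gt = coeff 3 g := by
    rw [hgt_exp, map_add, coeff_C_mul, coeff_Delta_three, coeff_DD_three, mul_zero, add_zero, h3]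
    linear_combination (1/6 : ℂ) * hp
  -- the tilde pair satisfies the same equations
  have hKid := Delta_key p
  have hdft : d⁄dX ℂ ft
      = (1 + C p * Delta p) * (1 + C A * Delta (-p))
        + Delta p * (C A * (1 - C p * Delta (-p))) := by
    rw [hft]; exact deriv_fam p A
  have hdgt : d⁄dX ℂ gt
      = (1 + C p * Delta p) * (1 + C B * Delta (-p))
        + Delta p * (C B * (1 - C p * Delta (-p))) := by
    rw [hgt]; exact deriv_fam p B
  have E1t : ft * d⁄dX ℂ gt - gt * d⁄dX ℂ ft = gt - ft := by
    rw [hdft, hdgt, hft, hgt]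
    linear_combination (C B - C A) * Delta p * hKid
  have e2b : C (2*b) = C p + 2 * C B := by
    rw [show (2:ℂ)*b = p + 2*B by rw [hB]; ring, map_add, map_mul, map_ofNat]
  have e2a : C (2*a) = C p + 2 * C A := by
    rw [show (2:ℂ)*a = p + 2*A by rw [hA]; ring, map_add, map_mul, map_ofNat]
  have E2t : d⁄dX ℂ ft + C (2*b) * ft = d⁄dX ℂ gt + C (2*a) * gt := by
    rw [hdft, hdgt, hft, hgt, e2b, e2a]
    linear_combination (C B - C A) * hKid
  -- difference series
  set u := f - ft with hu
  set v := g - gt with hv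
  have L1 : d⁄dX ℂ u - d⁄dX ℂ v + C (2*b) * u - C (2*a) * v = 0 := by
    rw [hu, hv, map_sub, map_sub]
    linear_combination hder - E2t
  have L2 : u * d⁄dX ℂ g - v * d⁄dX ℂ f + ft * d⁄dX ℂ v - gt * d⁄dX ℂ u + u - v = 0 := by
    rw [hu, hv, map_sub, map_sub]
    linear_combination E1 - E1t
  have hu0 : coeff 0 u = 0 := by rw [hu, map_sub, hf0, cft0, sub_self]
  have hu1 : coeff 1 u = 0 := by rw [hu, map_sub, hf1, cft1, sub_self]
  have hu2 : coeff 2 u = 0 := by rw [hu, map_sub, ← ha, cft2, sub_self]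
  have hu3 : coeff 3 u = 0 := by rw [hu, map_sub, cft3, sub_self]
  have hv0 : coeff 0 v = 0 := by rw [hv, map_sub, hg0, cgt0, sub_self]
  have hv1 : coeff 1 v = 0 := by rw [hv, map_sub, hg1, cgt1, sub_self]
  have hv2 : coeff 2 v = 0 := by rw [hv, map_sub, ← hb, cgt2, sub_self]
  have hv3 : coeff 3 v = 0 := by rw [hv, map_sub, cgt3, sub_self]
  have cdg0 : coeff 0 (d⁄dX ℂ g) = 1 := by rw [coeff_derivative, hg1]; norm_num
  have cdg1 : coeff 1 (d⁄dX ℂ g) = b * 2 := by rw [coeff_derivative, ← hb]; norm_num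
  have cdf0 : coeff 0 (d⁄dX ℂ f) = 1 := by rw [coeff_derivative, hf1]; norm_num
  have cdf1 : coeff 1 (d⁄dX ℂ f) = a * 2 := by rw [coeff_derivative, ← ha]; norm_num
  have main : ∀ n, coeff n u = 0 ∧ coeff n v = 0 := by
    intro n
    induction n using Nat.strong_induction_on with
    | _ n ih =>
      rcases Nat.lt_or_ge n 4 with h4 | h4
      · interval_cases n
        exacts [⟨hu0, hv0⟩, ⟨hu1, hv1⟩, ⟨hu2, hv2⟩, ⟨hu3, hv3⟩]
      · obtain ⟨m, rfl⟩ : ∃ m, n = m + 4 := ⟨n - 4, by omega⟩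
        have hzu : ∀ k ≤ m+3, coeff k u = 0 := fun k hk => (ih k (by omega)).1
        have hzv : ∀ k ≤ m+3, coeff k v = 0 := fun k hk => (ih k (by omega)).2
        have hzdu : ∀ k ≤ m+2, coeff k (d⁄dX ℂ u) = 0 := fun k hk => by
          rw [coeff_derivative, hzu (k+1) (by omega), zero_mul]
        have hzdv : ∀ k ≤ m+2, coeff k (d⁄dX ℂ v) = 0 := fun k hk => by
          rw [coeff_derivative, hzv (k+1) (by omega), zero_mul]
        have hM1 : ((m:ℂ) + 1) ≠ 0 := by
          have : ((m+1:ℕ):ℂ) ≠ 0 := Nat.cast_ne_zero.mpr (by omega)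
          push_cast at this; exact this
        have hM4 : ((m:ℂ) + 4) ≠ 0 := by
          have : ((m+4:ℕ):ℂ) ≠ 0 := Nat.cast_ne_zero.mpr (by omega)
          push_cast at this; exact this
        -- L1 at degree m+3 : equality of the two leading coefficients
        have eqa : coeff (m+4) u = coeff (m+4) v := by
          have h := congrArg (coeff (m+3)) L1
          simp only [map_add, map_sub, coeff_C_mul, coeff_derivative, map_zero,
            hzu (m+3) le_rfl, hzv (m+3) le_rfl, mul_zero, add_zero, sub_zero] at h
          have h' : (coeff (m+3+1) u - coeff (m+3+1) v) * ((m:ℂ)+3+1) = 0 := by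
            push_cast at h ⊢; linear_combination h
          rcases mul_eq_zero.mp h' with h'' | h''
          · linear_combination h''
          · exact absurd h'' (by push_cast; intro hq; apply hM4; linear_combination hq)
        -- L1 at degree m+4
        have eqb := congrArg (coeff (m+4)) L1
        simp only [map_add, map_sub, coeff_C_mul, coeff_derivative, map_zero] at eqb
        -- L2 at degree m+5
        have eqc := congrArg (coeff (m+5)) L2
        rw [map_sub, map_add, map_sub, map_add, map_sub,
          show (m+5) = (m+3)+2 from rfl,
          coeff_mul_lowvanish2 u (d⁄dX ℂ g) (m+3) hzu,
          coeff_mul_lowvanish2 v (d⁄dX ℂ f) (m+3) hzv,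
          mul_comm ft (d⁄dX ℂ v), mul_comm gt (d⁄dX ℂ u),
          show (m+3)+2 = (m+2)+3 by omega,
          coeff_mul_lowvanish3 (d⁄dX ℂ v) ft (m+2) hzdv,
          coeff_mul_lowvanish3 (d⁄dX ℂ u) gt (m+2) hzdu,
          map_zero] at eqc
        simp only [coeff_derivative, cdg0, cdg1, cdf0, cdf1, cft0, cft1, cft2,
          cgt0, cgt1, cgt2] at eqc
        -- scalar endgame
        have hba : (a * coeff (m+4) v - b * coeff (m+4) u) * (((m:ℂ)+1) * ((m:ℂ)+4))
            = 0 := by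
          push_cast at eqb eqc ⊢
          linear_combination ((m:ℂ)+3) * eqb + ((m:ℂ)+5) * eqc
        have hba2 : a * coeff (m+4) v - b * coeff (m+4) u = 0 := by
          rcases mul_eq_zero.mp hba with h' | h'
          · exact h'
          · rcases mul_eq_zero.mp h' with h'' | h''
            · exact absurd h'' hM1
            · exact absurd h'' hM4
        have hu4 : coeff (m+4) u = 0 := by
          rw [← eqa] at hba2
          have : (a - b) * coeff (m+4) u = 0 := by linear_combination hba2
          rcases mul_eq_zero.mp this with h' | h'
          · exact absurd (sub_eq_zero.mp h') hab
          · exact h'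
        exact ⟨hu4, eqa ▸ hu4⟩
  constructor
  · have : u = 0 := by ext n; rw [(main n).1, map_zero]
    have := sub_eq_zero.mp (hu ▸ this)
    exact this
  · have : v = 0 := by ext n; rw [(main n).2, map_zero]
    exact sub_eq_zero.mp (hv ▸ this)
end
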